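/- arXiv:2408.04888 — 2 statements merged into one kernel-verified Lean document; each statement's English description precedes it below -/
import Mathlib

section
/- (Kearns–Saul inequality) For every $p \in (0,1)$ with $p \ne 1/2$ and every $\lambda \in \mathbb{R}$, $\log\left(p e^{(1-p)\lambda} + (1-p)e^{-p\lambda}\right) \le \frac{2p-1}{4\log\frac{p}{1-p}}\,\lambda^2$. In other words, a centered Bernoulli($p$) random variable is sub-Gaussian with parameter $\sigma^2(p) = \frac{2p-1}{2\log\frac{p}{1-p}}$. -/
open Real Set

lemma hasDerivAt_tanh' (t : ℝ) :
    HasDerivAt (fun t => Real.sinh t / Real.cosh t) (1 / Real.cosh t ^ 2) t := by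
  have h := (Real.hasDerivAt_sinh t).div (Real.hasDerivAt_cosh t) (Real.cosh_pos t).ne'
  refine h.congr_deriv ?_
  have h2 := Real.cosh_sq_sub_sinh_sq t
  congr 1
  nlinarith [h2]

/-- tanh y / y is antitone: for 0 < x ≤ y, x * tanh y ≤ y * tanh x -/
lemma tanh_ratio {x y : ℝ} (hx : 0 < x) (hxy : x ≤ y) :
    x * (Real.sinh y / Real.cosh y) ≤ y * (Real.sinh x / Real.cosh x) := by
  set g : ℝ → ℝ := fun t => t * (Real.sinh x / Real.cosh x) - x * (Real.sinh t / Real.cosh t)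
    with hg
  have hderiv : ∀ t : ℝ, HasDerivAt g
      (Real.sinh x / Real.cosh x - x * (1 / Real.cosh t ^ 2)) t := by
    intro t
    have h1 : HasDerivAt (fun t : ℝ => t * (Real.sinh x / Real.cosh x))
        (Real.sinh x / Real.cosh x) t := by
      simpa using (hasDerivAt_id t).mul_const (Real.sinh x / Real.cosh x)
    exact h1.sub ((hasDerivAt_tanh' t).const_mul x)
  have hmono : MonotoneOn g (Ici x) := by
    apply monotoneOn_of_deriv_nonneg (convex_Ici x)
    · exact (Differentiable.continuous (fun t => (hderiv t).differentiableAt)).continuousOn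
    · exact fun t _ => (hderiv t).differentiableAt.differentiableWithinAt
    · intro t ht
      rw [interior_Ici, mem_Ioi] at ht
      rw [(hderiv t).deriv]
      have hxt : x < t := ht
      have hc1 : Real.cosh x ≤ Real.cosh t := by
        rw [Real.cosh_le_cosh]
        rw [abs_of_pos hx, abs_of_pos (hx.trans hxt)]
        exact hxt.le
      have hc2 : (1:ℝ) ≤ Real.cosh x := Real.one_le_cosh x
      have hs : x ≤ Real.sinh x := (Real.self_le_sinh_iff).2 hx.le
      have hcx : 0 < Real.cosh x := Real.cosh_pos x
      have hct : 0 < Real.cosh t := Real.cosh_pos t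
      have key : x * (1 / Real.cosh t ^ 2) ≤ Real.sinh x / Real.cosh x := by
        rw [mul_one_div, div_le_div_iff₀ (by positivity) hcx]
        have hsx : 0 < Real.sinh x := by rwa [Real.sinh_pos_iff]
        have h3 : Real.cosh x ^ 2 ≤ Real.cosh t ^ 2 := by nlinarith
        have h4 : Real.sinh x * Real.cosh x ^ 2 ≤ Real.sinh x * Real.cosh t ^ 2 :=
          mul_le_mul_of_nonneg_left h3 hsx.le
        have h5 : Real.cosh x ≤ Real.cosh x ^ 2 := by nlinarith
        have h6 : Real.sinh x * Real.cosh x ≤ Real.sinh x * Real.cosh x ^ 2 :=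
          mul_le_mul_of_nonneg_left h5 hsx.le
        have h7 : x * Real.cosh x ≤ Real.sinh x * Real.cosh x :=
          mul_le_mul_of_nonneg_right hs hcx.le
        linarith
      linarith
  have := hmono (self_mem_Ici) (mem_Ici.2 hxy) hxy
  simp only [hg] at this
  nlinarith [this]

lemma hasDerivAt_K (m t : ℝ) :
    HasDerivAt (fun x => Real.log (Real.cosh x) - m * x ^ 2)
      (Real.sinh t / Real.cosh t - m * (2 * t)) t := by
  have h1 := (Real.hasDerivAt_cosh t).log (Real.cosh_pos t).ne'
  have h2 : HasDerivAt (fun x : ℝ => m * x ^ 2) (m * (2 * t)) t := by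
    have := ((hasDerivAt_pow 2 t).const_mul m)
    simpa using this
  exact h1.sub h2

lemma K_cont (m : ℝ) : Continuous (fun x => Real.log (Real.cosh x) - m * x ^ 2) := by
  apply Continuous.sub
  · exact Real.continuous_cosh.log (fun t => (Real.cosh_pos t).ne')
  · continuity

/-- main: max of K at ±a, for a > 0 -/
lemma K_max {a : ℝ} (ha : 0 < a) (x : ℝ) :
    Real.log (Real.cosh x) - (Real.sinh a / Real.cosh a) / (2 * a) * x ^ 2
      ≤ Real.log (Real.cosh a) - (Real.sinh a / Real.cosh a) / (2 * a) * a ^ 2 := by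
  set m : ℝ := (Real.sinh a / Real.cosh a) / (2 * a) with hm
  set K : ℝ → ℝ := fun x => Real.log (Real.cosh x) - m * x ^ 2 with hK
  -- reduce to |x|
  have habs : K x = K |x| := by simp [hK, Real.cosh_abs, sq_abs]
  rw [show Real.log (Real.cosh x) - m * x ^ 2 = K x from rfl, habs]
  set y := |x| with hy
  have hy0 : 0 ≤ y := abs_nonneg x
  rcases le_or_gt y a with hya | hay
  · -- monotone on [0, a]
    have hmono : MonotoneOn K (Icc 0 a) := by
      apply monotoneOn_of_deriv_nonneg (convex_Icc 0 a) ((K_cont m).continuousOn)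
      · exact fun t _ => (hasDerivAt_K m t).differentiableAt.differentiableWithinAt
      · intro t ht
        rw [interior_Icc, mem_Ioo] at ht
        rw [(hasDerivAt_K m t).deriv]
        have hr := tanh_ratio ht.1 ht.2.le
        have : m * (2 * t) = t * (Real.sinh a / Real.cosh a) / a := by
          rw [hm]; field_simp
        rw [this, sub_nonneg, div_le_iff₀ ha]
        linarith
    exact hmono ⟨hy0, hya⟩ ⟨le_refl 0 |>.trans ha.le, le_refl a⟩ hya
  · -- antitone on [a, ∞)
    have hanti : AntitoneOn K (Ici a) := by
      apply antitoneOn_of_deriv_nonpos (convex_Ici a) ((K_cont m).continuousOn)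
      · exact fun t _ => (hasDerivAt_K m t).differentiableAt.differentiableWithinAt
      · intro t ht
        rw [interior_Ici, mem_Ioi] at ht
        rw [(hasDerivAt_K m t).deriv]
        have hr := tanh_ratio ha ht.le
        have : m * (2 * t) = t * (Real.sinh a / Real.cosh a) / a := by
          rw [hm]; field_simp
        rw [this, sub_nonpos, le_div_iff₀ ha]
        linarith
    exact hanti (self_mem_Ici) (mem_Ici.2 hay.le) hay.le

/-- Kearns–Saul inequality: a centered Bernoulli(`p`) random variable is sub-Gaussian with
parameter `(2p-1)/(2 log(p/(1-p)))`. -/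
theorem kearnsSaul (p : ℝ) (hp : p ∈ Set.Ioo (0 : ℝ) 1) (hp2 : p ≠ 1 / 2) (lam : ℝ) :
    Real.log (p * Real.exp ((1 - p) * lam) + (1 - p) * Real.exp (-p * lam))
      ≤ (2 * p - 1) / (4 * Real.log (p / (1 - p))) * lam ^ 2 := by
  obtain ⟨hp0, hp1⟩ := hp
  have hq : 0 < 1 - p := by linarith
  set L : ℝ := Real.log (p / (1 - p)) with hL
  set a : ℝ := L / 2 with haDef
  set s : ℝ := lam / 2 with hsDef
  have hpq : 0 < p / (1 - p) := by positivity
  have hE2 : Real.exp a * Real.exp a = p / (1 - p) := by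
    rw [← Real.exp_add, haDef]
    rw [show L / 2 + L / 2 = L by ring, hL, Real.exp_log hpq]
  have hL0 : L ≠ 0 := by
    intro h
    rw [hL] at h
    rcases (Real.log_eq_zero).1 h with h' | h' | h'
    · exact absurd h' hpq.ne'
    · have : p = 1 - p := by field_simp at h'; linarith
      exact hp2 (by linarith)
    · nlinarith
  have ha0 : a ≠ 0 := by
    rw [haDef]; exact div_ne_zero hL0 two_ne_zero
  set E : ℝ := Real.exp a with hE
  have hE0 : 0 < E := Real.exp_pos a
  have hEq : E ^ 2 * (1 - p) = p := by
    rw [sq, hE2]; field_simp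
  have hcosh : Real.cosh a = (E + E⁻¹) / 2 := by
    rw [Real.cosh_eq, hE, Real.exp_neg]
  have hcp : Real.cosh a * (2 * p) = E := by
    rw [hcosh]; field_simp; nlinarith [hEq]
  have hcq : Real.cosh a * (2 * (1 - p)) = E⁻¹ := by
    rw [hcosh]; field_simp; nlinarith [hEq]
  have hsinh : Real.sinh a = Real.cosh a * (2 * p - 1) := by
    have : Real.sinh a = (E - E⁻¹) / 2 := by rw [Real.sinh_eq, hE, Real.exp_neg]
    rw [this, ← hcq, ← hcp]; ring
  have hca : 0 < Real.cosh a := Real.cosh_pos a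
  have htanh : Real.sinh a / Real.cosh a = 2 * p - 1 := by
    rw [hsinh]; field_simp
  -- key identity
  have hkey : p * Real.exp ((1 - p) * lam) + (1 - p) * Real.exp (-p * lam)
      = Real.exp ((1 - 2 * p) * s) * Real.cosh (a + s) / Real.cosh a := by
    have hc2 : Real.cosh (a + s) = Real.cosh a * (p * Real.exp s + (1 - p) * Real.exp (-s)) := by
      rw [Real.cosh_eq, Real.exp_add, show -(a + s) = -a + -s by ring, Real.exp_add,
        Real.exp_neg a, ← hE, ← hcq, ← hcp]
      ring
    rw [hc2, show Real.exp ((1 - 2 * p) * s) * (Real.cosh a * (p * Real.exp s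
        + (1 - p) * Real.exp (-s))) / Real.cosh a
      = p * (Real.exp ((1 - 2 * p) * s) * Real.exp s)
        + (1 - p) * (Real.exp ((1 - 2 * p) * s) * Real.exp (-s)) from by field_simp,
      ← Real.exp_add, ← Real.exp_add,
      show (1 - 2 * p) * s + s = (1 - p) * lam by rw [hsDef]; ring,
      show (1 - 2 * p) * s + -s = -p * lam by rw [hsDef]; ring]
  have hlog : Real.log (p * Real.exp ((1 - p) * lam) + (1 - p) * Real.exp (-p * lam))
      = (1 - 2 * p) * s + Real.log (Real.cosh (a + s)) - Real.log (Real.cosh a) := by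
    rw [hkey, Real.log_div (by positivity) hca.ne', Real.log_mul (Real.exp_ne_zero _)
      (Real.cosh_pos _).ne', Real.log_exp]
  -- apply K_max with |a|
  have hK := K_max (abs_pos.2 ha0) (a + s)
  have hmeq : Real.sinh |a| / Real.cosh |a| / (2 * |a|) = Real.sinh a / Real.cosh a / (2 * a) := by
    rcases abs_cases a with ⟨h1, _⟩ | ⟨h1, _⟩
    · rw [h1]
    · rw [h1, Real.sinh_neg, Real.cosh_neg]; field_simp
  rw [hmeq, Real.cosh_abs, sq_abs, htanh] at hK
  -- conclude
  rw [hlog]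
  have h2a : 2 * a = L := by rw [haDef]; ring
  have hfinal : (1 - 2 * p) * s + ((2 * p - 1) / (2 * a) * (a + s) ^ 2
      - (2 * p - 1) / (2 * a) * a ^ 2) = (2 * p - 1) / (4 * L) * lam ^ 2 := by
    rw [← h2a, hsDef]
    field_simp
    ring
  linarith [hK]
end

section
/- (Composition of two LDP randomisers, numeric part) For all reals $\varepsilon_1, \varepsilon_2 > 0$, $\log\left(\frac{e^{\varepsilon_1+\varepsilon_2}+1}{e^{\varepsilon_1}+e^{\varepsilon_2}}\right) \le \frac{1}{2}\varepsilon_1\varepsilon_2$. -/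
open Real

/-- `sinh x ≤ x * cosh x` for `x ≥ 0`. -/
lemma sinh_le_mul_cosh' {x : ℝ} (hx : 0 ≤ x) : Real.sinh x ≤ x * Real.cosh x := by
  have hd : ∀ t : ℝ, HasDerivAt (fun u => u * Real.cosh u - Real.sinh u)
      (t * Real.sinh t) t := by
    intro t
    have h1 : HasDerivAt (fun u : ℝ => u * Real.cosh u)
        (1 * Real.cosh t + t * Real.sinh t) t :=
      (hasDerivAt_id t).mul (Real.hasDerivAt_cosh t)
    have := h1.sub (Real.hasDerivAt_sinh t)
    exact this.congr_deriv (by ring)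
  have hmono : MonotoneOn (fun u => u * Real.cosh u - Real.sinh u) (Set.Ici 0) := by
    apply monotoneOn_of_deriv_nonneg (convex_Ici 0)
    · exact (Continuous.continuousOn (by continuity))
    · intro t _
      exact (hd t).differentiableAt.differentiableWithinAt
    · intro t ht
      rw [(hd t).deriv]
      simp only [interior_Ici, Set.mem_Ioi] at ht
      exact mul_nonneg ht.le ((by simpa using Real.sinh_le_sinh.mpr ht.le))
  have h0 := hmono (Set.self_mem_Ici) (Set.mem_Ici.mpr hx) hx
  simpa using h0

/-- `log (cosh x) - log (cosh y) ≤ (x^2 - y^2)/2` for `0 ≤ y ≤ x`. -/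
lemma log_cosh_sub_le {x y : ℝ} (hy : 0 ≤ y) (hxy : y ≤ x) :
    Real.log (Real.cosh x) - Real.log (Real.cosh y) ≤ (x ^ 2 - y ^ 2) / 2 := by
  have hd : ∀ t : ℝ, HasDerivAt (fun u => u ^ 2 / 2 - Real.log (Real.cosh u))
      (t - Real.sinh t / Real.cosh t) t := by
    intro t
    have h1 : HasDerivAt (fun u : ℝ => u ^ 2 / 2) t t := by
      have := (hasDerivAt_pow 2 t).div_const 2
      exact this.congr_deriv (by norm_num)
    have h2 : HasDerivAt (fun u : ℝ => Real.log (Real.cosh u))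
        (Real.sinh t / Real.cosh t) t :=
      (Real.hasDerivAt_cosh t).log (Real.cosh_pos t).ne'
    exact h1.sub h2
  have hmono : MonotoneOn (fun u => u ^ 2 / 2 - Real.log (Real.cosh u)) (Set.Ici 0) := by
    apply monotoneOn_of_deriv_nonneg (convex_Ici 0)
    · apply Continuous.continuousOn
      exact (continuous_pow 2).div_const 2 |>.sub
        ((Real.continuous_cosh.log fun t => (Real.cosh_pos t).ne'))
    · intro t _
      exact (hd t).differentiableAt.differentiableWithinAt
    · intro t ht
      rw [(hd t).deriv]
      simp only [interior_Ici, Set.mem_Ioi] at ht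
      rw [sub_nonneg, div_le_iff₀ (Real.cosh_pos t)]
      exact sinh_le_mul_cosh' ht.le
  have h0 := hmono (Set.mem_Ici.mpr hy) (Set.mem_Ici.mpr (hy.trans hxy)) hxy
  simp only at h0
  linarith

/-- Numeric part of composition of two LDP randomisers:
`log((e^{ε₁+ε₂}+1)/(e^{ε₁}+e^{ε₂})) ≤ ε₁ε₂/2`. -/
theorem ldp_composition_bound (ε₁ ε₂ : ℝ) (h₁ : 0 < ε₁) (h₂ : 0 < ε₂) :
    Real.log ((Real.exp (ε₁ + ε₂) + 1) / (Real.exp ε₁ + Real.exp ε₂)) ≤ 1 / 2 * ε₁ * ε₂ := by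
  have key : ∀ s t : ℝ, Real.exp (s + t) + Real.exp (s - t)
      = 2 * Real.exp s * Real.cosh t := by
    intro s t
    rw [Real.cosh_eq, Real.exp_add, Real.exp_sub, Real.exp_neg]
    have := (Real.exp_pos t).ne'
    field_simp
  set X := (ε₁ + ε₂) / 2 with hX
  set Y := |ε₁ - ε₂| / 2 with hY
  have hnum : Real.exp (ε₁ + ε₂) + 1 = 2 * Real.exp X * Real.cosh X := by
    have := key X X
    simp only [hX] at this ⊢
    rw [← this]
    norm_num
  have hden : Real.exp ε₁ + Real.exp ε₂ = 2 * Real.exp X * Real.cosh Y := by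
    have h := key X ((ε₁ - ε₂) / 2)
    have hc : Real.cosh ((ε₁ - ε₂) / 2) = Real.cosh Y := by
      rw [hY, ← Real.cosh_abs, abs_div]
      norm_num
    rw [hc] at h
    rw [← h, hX]
    ring_nf
  have hfrac : (Real.exp (ε₁ + ε₂) + 1) / (Real.exp ε₁ + Real.exp ε₂)
      = Real.cosh X / Real.cosh Y := by
    rw [hnum, hden]
    rw [mul_div_mul_left _ _ (by positivity : (2 : ℝ) * Real.exp X ≠ 0)]
  rw [hfrac, Real.log_div (Real.cosh_pos X).ne' (Real.cosh_pos Y).ne']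
  have hY0 : 0 ≤ Y := by positivity
  have hYX : Y ≤ X := by
    rw [hY, hX, div_le_div_iff_of_pos_right two_pos, abs_le]
    constructor <;> linarith
  have := log_cosh_sub_le hY0 hYX
  have hsq : (X ^ 2 - Y ^ 2) / 2 = 1 / 2 * ε₁ * ε₂ := by
    rw [hX, hY, div_pow, div_pow, sq_abs]
    ring
  linarith
end
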